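/- Let u : ℝ³ → ℝ be a C³ solution of u_yy = u_tx + u_y·u_xx − u_x·u_xy, and let T : ℝ → ℝ be a C⁴ function of t. Then the function v(t,x,y) := T(t)·u_t + T′(t)·(x·u_x + y·u_y − u) + (1/2)·T″(t)·(y²·u_x − 2xy) − (1/6)·T‴(t)·y³ satisfies the linearized equation v_yy = v_tx + u_y·v_xx + u_xx·v_y − u_x·v_xy − u_xy·v_x at every point of ℝ³. -/

import Mathlib

/-- Partial derivative of `f : ℝ³ → ℝ` in the direction `v`. -/
noncomputable def pd3 (v : ℝ × ℝ × ℝ) (f : ℝ × ℝ × ℝ → ℝ) : ℝ × ℝ × ℝ → ℝ :=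
  fun p => fderiv ℝ f p v

noncomputable def dt : (ℝ × ℝ × ℝ → ℝ) → ℝ × ℝ × ℝ → ℝ := pd3 (1, 0, 0)
noncomputable def dx : (ℝ × ℝ × ℝ → ℝ) → ℝ × ℝ × ℝ → ℝ := pd3 (0, 1, 0)
noncomputable def dy : (ℝ × ℝ × ℝ → ℝ) → ℝ × ℝ × ℝ → ℝ := pd3 (0, 0, 1)

lemma pd3_contDiff {n : ℕ} {f : ℝ × ℝ × ℝ → ℝ} (hf : ContDiff ℝ (n+1 : ℕ) f) (v : ℝ × ℝ × ℝ) :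
    ContDiff ℝ n (pd3 v f) := by
  have h := (contDiff_succ_iff_fderiv (n := (n : WithTop ℕ∞)) (f := f)).mp (by exact_mod_cast hf)
  exact h.2.2.clm_apply contDiff_const

lemma pd3_add {f g : ℝ × ℝ × ℝ → ℝ} {p v : ℝ × ℝ × ℝ}
    (hf : DifferentiableAt ℝ f p) (hg : DifferentiableAt ℝ g p) :
    pd3 v (fun q => f q + g q) p = pd3 v f p + pd3 v g p := by
  simp [pd3, fderiv_fun_add hf hg]

lemma pd3_sub {f g : ℝ × ℝ × ℝ → ℝ} {p v : ℝ × ℝ × ℝ}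
    (hf : DifferentiableAt ℝ f p) (hg : DifferentiableAt ℝ g p) :
    pd3 v (fun q => f q - g q) p = pd3 v f p - pd3 v g p := by
  simp [pd3, fderiv_fun_sub hf hg]

lemma pd3_mul {f g : ℝ × ℝ × ℝ → ℝ} {p v : ℝ × ℝ × ℝ}
    (hf : DifferentiableAt ℝ f p) (hg : DifferentiableAt ℝ g p) :
    pd3 v (fun q => f q * g q) p = pd3 v f p * g p + f p * pd3 v g p := by
  simp [pd3, fderiv_fun_mul hf hg]; ring

lemma pd3_const {p v : ℝ × ℝ × ℝ} (c : ℝ) : pd3 v (fun _ => c) p = 0 := by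
  simp [pd3]

lemma pd3_comp_fst {T : ℝ → ℝ} {p v : ℝ × ℝ × ℝ} (hT : DifferentiableAt ℝ T p.1) :
    pd3 v (fun q => T q.1) p = v.1 * deriv T p.1 := by
  have h1 : HasFDerivAt (fun q : ℝ × ℝ × ℝ => q.1) (ContinuousLinearMap.fst ℝ ℝ (ℝ × ℝ)) p :=
    hasFDerivAt_fst
  have h2 : HasFDerivAt (fun q : ℝ × ℝ × ℝ => T q.1)
      ((ContinuousLinearMap.smulRight (1 : ℝ →L[ℝ] ℝ) (deriv T p.1)).comp
        (ContinuousLinearMap.fst ℝ ℝ (ℝ × ℝ))) p :=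
    (hT.hasDerivAt.hasFDerivAt).comp p h1
  simp [pd3, h2.fderiv, mul_comm]

lemma pd3_x {p v : ℝ × ℝ × ℝ} : pd3 v (fun q => q.2.1) p = v.2.1 := by
  have h : HasFDerivAt (fun q : ℝ × ℝ × ℝ => q.2.1)
      ((ContinuousLinearMap.fst ℝ ℝ ℝ).comp (ContinuousLinearMap.snd ℝ ℝ (ℝ × ℝ))) p :=
    hasFDerivAt_fst.comp p hasFDerivAt_snd
  simp [pd3, h.fderiv]

lemma pd3_y {p v : ℝ × ℝ × ℝ} : pd3 v (fun q => q.2.2) p = v.2.2 := by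
  have h : HasFDerivAt (fun q : ℝ × ℝ × ℝ => q.2.2)
      ((ContinuousLinearMap.snd ℝ ℝ ℝ).comp (ContinuousLinearMap.snd ℝ ℝ (ℝ × ℝ))) p :=
    hasFDerivAt_snd.comp p hasFDerivAt_snd
  simp [pd3, h.fderiv]

lemma pd3_comm {f : ℝ × ℝ × ℝ → ℝ} (hf : ContDiff ℝ 2 f) (a b p : ℝ × ℝ × ℝ) :
    pd3 a (pd3 b f) p = pd3 b (pd3 a f) p := by
  have hsymm := (hf.contDiffAt (x := p)).isSymmSndFDerivAt (by simp [minSmoothness_of_isRCLikeNormedField])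
  have hd : Differentiable ℝ (fderiv ℝ f) := by
    have h := (contDiff_succ_iff_fderiv (n := (1 : WithTop ℕ∞)) (f := f)).mp (by exact_mod_cast hf)
    exact h.2.2.differentiable one_ne_zero
  have key : ∀ c d : ℝ × ℝ × ℝ, pd3 c (pd3 d f) p = fderiv ℝ (fderiv ℝ f) p c d := by
    intro c d
    show fderiv ℝ (fun q => (fderiv ℝ f q) d) p c = _
    rw [fderiv_clm_apply (hd p) (differentiableAt_const _)]
    simp
  rw [key, key, hsymm]

theorem theta5_is_symmetry (u : ℝ × ℝ × ℝ → ℝ) (hu : ContDiff ℝ 3 u)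
    (T : ℝ → ℝ) (hT : ContDiff ℝ 4 T)
    (heq : ∀ p : ℝ × ℝ × ℝ,
      dy (dy u) p = dt (dx u) p + dy u p * dx (dx u) p - dx u p * dx (dy u) p) :
    ∀ p : ℝ × ℝ × ℝ,
      (fun v : ℝ × ℝ × ℝ → ℝ =>
        dy (dy v) p = dt (dx v) p + dy u p * dx (dx v) p + dx (dx u) p * dy v p
          - dx u p * dx (dy v) p - dx (dy u) p * dx v p)
      (fun q => T q.1 * dt u q
        + deriv T q.1 * (q.2.1 * dx u q + q.2.2 * dy u q - u q)
        + (1 / 2) * deriv (deriv T) q.1 * (q.2.2 ^ 2 * dx u q - 2 * q.2.1 * q.2.2)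
        - (1 / 6) * deriv (deriv (deriv T)) q.1 * q.2.2 ^ 3) := by
  intro p
  -- smoothness facts
  have hu2 : ∀ a, ContDiff ℝ 2 (pd3 a u) := fun a =>
    pd3_contDiff (n := 2) (by exact_mod_cast hu) a
  have hu1 : ∀ a b, ContDiff ℝ 1 (pd3 a (pd3 b u)) := fun a b =>
    pd3_contDiff (n := 1) (by exact_mod_cast hu2 b) a
  have hud : Differentiable ℝ u := hu.differentiable (by norm_num)
  have hd1 : ∀ a, Differentiable ℝ (pd3 a u) := fun a => (hu2 a).differentiable (by norm_num)
  have hd2 : ∀ a b, Differentiable ℝ (pd3 a (pd3 b u)) := fun a b =>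
    (hu1 a b).differentiable (by norm_num)
  have hDt : Differentiable ℝ (pd3 (1,0,0) u) := hd1 _
  have hDx : Differentiable ℝ (pd3 (0,1,0) u) := hd1 _
  have hDy : Differentiable ℝ (pd3 (0,0,1) u) := hd1 _
  have hDtx : Differentiable ℝ (pd3 (1,0,0) (pd3 (0,1,0) u)) := hd2 _ _
  have hDty : Differentiable ℝ (pd3 (1,0,0) (pd3 (0,0,1) u)) := hd2 _ _
  have hDxx : Differentiable ℝ (pd3 (0,1,0) (pd3 (0,1,0) u)) := hd2 _ _
  have hDxy : Differentiable ℝ (pd3 (0,1,0) (pd3 (0,0,1) u)) := hd2 _ _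
  have hDyy : Differentiable ℝ (pd3 (0,0,1) (pd3 (0,0,1) u)) := hd2 _ _
  have hT0 : Differentiable ℝ T := hT.differentiable (by norm_num)
  have hT1c : ContDiff ℝ 3 (deriv T) := ((contDiff_succ_iff_deriv (n := 3)).mp
    (by exact_mod_cast hT)).2.2
  have hT1 : Differentiable ℝ (deriv T) := hT1c.differentiable (by norm_num)
  have hT2c : ContDiff ℝ 2 (deriv (deriv T)) := ((contDiff_succ_iff_deriv (n := 2)).mp
    (by exact_mod_cast hT1c)).2.2
  have hT2 : Differentiable ℝ (deriv (deriv T)) := hT2c.differentiable (by norm_num)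
  have hT3c : ContDiff ℝ 1 (deriv (deriv (deriv T))) := ((contDiff_succ_iff_deriv (n := 1)).mp
    (by exact_mod_cast hT2c)).2.2
  have hT3 : Differentiable ℝ (deriv (deriv (deriv T))) := hT3c.differentiable (by norm_num)
  -- Schwarz commutation
  have hswap2 : ∀ a b : ℝ × ℝ × ℝ, pd3 a (pd3 b u) = pd3 b (pd3 a u) := fun a b =>
    funext fun q => pd3_comm (hu.of_le (by norm_num)) a b q
  have hswap3 : ∀ a b c : ℝ × ℝ × ℝ, ∀ q, pd3 a (pd3 b (pd3 c u)) q = pd3 b (pd3 a (pd3 c u)) q :=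
    fun a b c q => pd3_comm (hu2 c) a b q
  have c21 := hswap2 (0,1,0) (1,0,0)
  have c31 := hswap2 (0,0,1) (1,0,0)
  have c32 := hswap2 (0,0,1) (0,1,0)
  have s1 := hswap3 (0,0,1) (1,0,0) (0,0,1)
  have s2 := hswap3 (0,0,1) (0,1,0) (0,0,1)
  have s3 := hswap3 (0,1,0) (1,0,0) (0,1,0)
  have s4 := hswap3 (0,1,0) (1,0,0) (0,0,1)
  have s5 := hswap3 (0,0,1) (1,0,0) (0,1,0)
  have s6 := hswap3 (0,0,1) (0,1,0) (0,1,0)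
  -- rewrite the symmetry candidate without powers
  have hV : (fun q : ℝ × ℝ × ℝ => T q.1 * dt u q
        + deriv T q.1 * (q.2.1 * dx u q + q.2.2 * dy u q - u q)
        + (1 / 2) * deriv (deriv T) q.1 * (q.2.2 ^ 2 * dx u q - 2 * q.2.1 * q.2.2)
        - (1 / 6) * deriv (deriv (deriv T)) q.1 * q.2.2 ^ 3)
      = (fun q : ℝ × ℝ × ℝ => T q.1 * pd3 (1,0,0) u q
        + deriv T q.1 * (q.2.1 * pd3 (0,1,0) u q + q.2.2 * pd3 (0,0,1) u q - u q)
        + 1 / 2 * deriv (deriv T) q.1 * (q.2.2 * q.2.2 * pd3 (0,1,0) u q - 2 * q.2.1 * q.2.2)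
        - 1 / 6 * deriv (deriv (deriv T)) q.1 * (q.2.2 * (q.2.2 * q.2.2))) := by
    funext q
    simp only [dt, dx, dy]
    ring
  -- first-order derivatives of v
  have hvx : pd3 (0,1,0) (fun q : ℝ × ℝ × ℝ => T q.1 * pd3 (1,0,0) u q
        + deriv T q.1 * (q.2.1 * pd3 (0,1,0) u q + q.2.2 * pd3 (0,0,1) u q - u q)
        + 1 / 2 * deriv (deriv T) q.1 * (q.2.2 * q.2.2 * pd3 (0,1,0) u q - 2 * q.2.1 * q.2.2)
        - 1 / 6 * deriv (deriv (deriv T)) q.1 * (q.2.2 * (q.2.2 * q.2.2)))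
      = (fun q : ℝ × ℝ × ℝ => T q.1 * pd3 (1,0,0) (pd3 (0,1,0) u) q
        + deriv T q.1 * (q.2.1 * pd3 (0,1,0) (pd3 (0,1,0) u) q
            + q.2.2 * pd3 (0,1,0) (pd3 (0,0,1) u) q)
        + 1 / 2 * deriv (deriv T) q.1 * (q.2.2 * q.2.2 * pd3 (0,1,0) (pd3 (0,1,0) u) q
            - 2 * q.2.2)) := by
    funext q
    simp (disch := fun_prop) only [pd3_add, pd3_sub, pd3_mul, pd3_const, pd3_comp_fst,
      pd3_x, pd3_y, c21, c31, c32]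
    ring
  have hvy : pd3 (0,0,1) (fun q : ℝ × ℝ × ℝ => T q.1 * pd3 (1,0,0) u q
        + deriv T q.1 * (q.2.1 * pd3 (0,1,0) u q + q.2.2 * pd3 (0,0,1) u q - u q)
        + 1 / 2 * deriv (deriv T) q.1 * (q.2.2 * q.2.2 * pd3 (0,1,0) u q - 2 * q.2.1 * q.2.2)
        - 1 / 6 * deriv (deriv (deriv T)) q.1 * (q.2.2 * (q.2.2 * q.2.2)))
      = (fun q : ℝ × ℝ × ℝ => T q.1 * pd3 (1,0,0) (pd3 (0,0,1) u) q
        + deriv T q.1 * (q.2.1 * pd3 (0,1,0) (pd3 (0,0,1) u) q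
            + q.2.2 * pd3 (0,0,1) (pd3 (0,0,1) u) q)
        + 1 / 2 * deriv (deriv T) q.1 * (2 * q.2.2 * pd3 (0,1,0) u q
            + q.2.2 * q.2.2 * pd3 (0,1,0) (pd3 (0,0,1) u) q - 2 * q.2.1)
        - 1 / 2 * deriv (deriv (deriv T)) q.1 * (q.2.2 * q.2.2)) := by
    funext q
    simp (disch := fun_prop) only [pd3_add, pd3_sub, pd3_mul, pd3_const, pd3_comp_fst,
      pd3_x, pd3_y, c21, c31, c32]
    ring
  -- the PDE and its derivatives
  have hE0 := heq p
  simp only [dt, dx, dy] at hE0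
  have hEfun : pd3 (0,0,1) (pd3 (0,0,1) u)
      = (fun q => pd3 (1,0,0) (pd3 (0,1,0) u) q
          + pd3 (0,0,1) u q * pd3 (0,1,0) (pd3 (0,1,0) u) q
          - pd3 (0,1,0) u q * pd3 (0,1,0) (pd3 (0,0,1) u) q) := by
    funext q
    have := heq q
    simp only [dt, dx, dy] at this
    exact this
  have hEt : pd3 (1,0,0) (pd3 (0,0,1) (pd3 (0,0,1) u)) p
      = pd3 (1,0,0) ((fun q => pd3 (1,0,0) (pd3 (0,1,0) u) q
          + pd3 (0,0,1) u q * pd3 (0,1,0) (pd3 (0,1,0) u) q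
          - pd3 (0,1,0) u q * pd3 (0,1,0) (pd3 (0,0,1) u) q)) p := by rw [← hEfun]
  have hEx : pd3 (0,1,0) (pd3 (0,0,1) (pd3 (0,0,1) u)) p
      = pd3 (0,1,0) ((fun q => pd3 (1,0,0) (pd3 (0,1,0) u) q
          + pd3 (0,0,1) u q * pd3 (0,1,0) (pd3 (0,1,0) u) q
          - pd3 (0,1,0) u q * pd3 (0,1,0) (pd3 (0,0,1) u) q)) p := by rw [← hEfun]
  have hEy : pd3 (0,0,1) (pd3 (0,0,1) (pd3 (0,0,1) u)) p
      = pd3 (0,0,1) ((fun q => pd3 (1,0,0) (pd3 (0,1,0) u) q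
          + pd3 (0,0,1) u q * pd3 (0,1,0) (pd3 (0,1,0) u) q
          - pd3 (0,1,0) u q * pd3 (0,1,0) (pd3 (0,0,1) u) q)) p := by rw [← hEfun]
  simp (disch := fun_prop) only [pd3_add, pd3_sub, pd3_mul, pd3_const,
    c21, c31, c32, s1, s2, s3, s4, s5, s6] at hEt hEx hEy
  -- main computation
  show dy (dy _) p = _
  simp only [hV]
  simp only [dt, dx, dy]
  rw [hvx, hvy]
  simp (disch := fun_prop) only [pd3_add, pd3_sub, pd3_mul, pd3_const, pd3_comp_fst,
    pd3_x, pd3_y, c21, c31, c32, s1, s2, s3, s4, s5, s6]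
  linear_combination T p.1 * hEt + deriv T p.1 * hE0
    + (deriv T p.1 * p.2.1 + 1 / 2 * deriv (deriv T) p.1 * (p.2.2 * p.2.2)) * hEx
    + deriv T p.1 * p.2.2 * hEy
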